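/- In the 3×3 prize game with objective success probabilities U°(a_j, a_k) given by the matrix rows (0.25, 0.50, 0.70; 0.20, 0.40, 0.40; 0.15, 0.20, 0.20), and with mutant theory Θ_B = {F_H, F_L} whose KL divergences from the equilibrium data are KL(F_H) = λ·KL(0.4‖0.8) and KL(F_L) = λ·KL(0.4‖0.1) + (1−λ)·KL(0.2‖0.4), where KL(p‖q) = p·ln(p/q) + (1−p)·ln((1−p)/(1−q)): the threshold λ_h solving (1−λ)·KL(0.2‖0.4) = λ·(KL(0.4‖0.8) − KL(0.4‖0.1)) satisfies λ_h ∈ (0.5, 0.6), and for λ < λ_h model F_H has strictly smaller KL divergence than F_L while for λ > λ_h the order reverses. Moreover the mutant fitness 0.4λ + 0.2(1−λ) in the F_H-belief equilibrium exceeds the resident fitness 0.25 iff λ > 0.25. Hence the resident correct theory is evolutionarily stable at λ=0 and λ=1 but fragile for λ ∈ (0.25, λ_h). -/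
import Mathlib


set_option maxHeartbeats 1600000 in
/-- non-monotonic stability in matching assortativity in the 3×3 prize game.
The threshold λ_h solving (1−λ)KL(0.2‖0.4) = λ(KL(0.4‖0.8) − KL(0.4‖0.1)) lies in
(0.5, 0.6); for λ < λ_h model F_H has strictly smaller weighted KL divergence than F_L
and for λ > λ_h the order reverses; and mutant fitness 0.4λ + 0.2(1−λ) exceeds the
resident fitness 0.25 iff λ > 0.25. -/
theorem nonmonotonic_stability
    (KL : ℝ → ℝ → ℝ)
    (hKL : ∀ p q : ℝ, KL p q = p * Real.log (p / q) + (1 - p) * Real.log ((1 - p) / (1 - q)))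
    (lamh : ℝ)
    (hlamh : (1 - lamh) * KL 0.2 0.4 = lamh * (KL 0.4 0.8 - KL 0.4 0.1)) :
    lamh ∈ Set.Ioo (0.5 : ℝ) 0.6 ∧
    (∀ lam ∈ Set.Icc (0:ℝ) 1, lam < lamh →
      lam * KL 0.4 0.8 < lam * KL 0.4 0.1 + (1 - lam) * KL 0.2 0.4) ∧
    (∀ lam ∈ Set.Icc (0:ℝ) 1, lamh < lam →
      lam * KL 0.4 0.1 + (1 - lam) * KL 0.2 0.4 < lam * KL 0.4 0.8) ∧
    (∀ lam : ℝ, 0.4 * lam + 0.2 * (1 - lam) > 0.25 ↔ lam > 0.25) := by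
  set l2 := Real.log 2 with hl2
  set l3 := Real.log 3 with hl3
  have log4 : Real.log 4 = 2 * l2 := by
    rw [show (4:ℝ) = 2^2 by norm_num, Real.log_pow]; push_cast; ring
  have eA : KL 0.2 0.4 = 1.4 * l2 - 0.8 * l3 := by
    rw [hKL]
    rw [show (0.2:ℝ)/0.4 = 2⁻¹ by norm_num, Real.log_inv]
    rw [show (1-0.2:ℝ)/(1-0.4) = 4/3 by norm_num,
      Real.log_div (by norm_num) (by norm_num), log4]
    ring
  have eH : KL 0.4 0.8 = -0.4 * l2 + 0.6 * l3 := by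
    rw [hKL]
    rw [show (0.4:ℝ)/0.8 = 2⁻¹ by norm_num, Real.log_inv]
    rw [show (1-0.4:ℝ)/(1-0.8) = 3 by norm_num]
    ring
  have eL : KL 0.4 0.1 = 1.4 * l2 - 0.6 * l3 := by
    rw [hKL]
    rw [show (0.4:ℝ)/0.1 = 4 by norm_num, log4]
    rw [show (1-0.4:ℝ)/(1-0.1) = 2/3 by norm_num,
      Real.log_div (by norm_num) (by norm_num)]
    ring
  -- key numeric inequalities on logs
  have h98 : 3 * l2 < 2 * l3 := by
    have := Real.log_lt_log (by norm_num : (0:ℝ) < 8) (by norm_num : (8:ℝ) < 9)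
    rw [show (8:ℝ) = 2^3 by norm_num, show (9:ℝ) = 3^2 by norm_num,
      Real.log_pow, Real.log_pow] at this
    push_cast at this; linarith
  have h243 : 5 * l3 < 8 * l2 := by
    have := Real.log_lt_log (by norm_num : (0:ℝ) < 243) (by norm_num : (243:ℝ) < 256)
    rw [show (243:ℝ) = 3^5 by norm_num, show (256:ℝ) = 2^8 by norm_num,
      Real.log_pow, Real.log_pow] at this
    push_cast at this; linarith
  have h41 : 41 * l2 < 26 * l3 := by
    have := Real.log_lt_log (by norm_num : (0:ℝ) < 2199023255552)
      (by norm_num : (2199023255552:ℝ) < 2541865828329)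
    rw [show (2199023255552:ℝ) = 2^41 by norm_num,
      show (2541865828329:ℝ) = 3^26 by norm_num,
      Real.log_pow, Real.log_pow] at this
    push_cast at this; linarith
  -- abbreviations
  have hB : (0:ℝ) < (-0.4 * l2 + 0.6 * l3) - (1.4 * l2 - 0.6 * l3) := by linarith
  have hAB : (1.4 * l2 - 0.8 * l3) > ((-0.4 * l2 + 0.6 * l3) - (1.4 * l2 - 0.6 * l3)) := by
    linarith
  have h2A3B : 2 * (1.4 * l2 - 0.8 * l3) <
      3 * ((-0.4 * l2 + 0.6 * l3) - (1.4 * l2 - 0.6 * l3)) := by linarith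
  rw [eA, eH, eL] at hlamh
  have hpos : (0:ℝ) < (1.4 * l2 - 0.8 * l3) + ((-0.4 * l2 + 0.6 * l3) - (1.4 * l2 - 0.6 * l3)) := by
    linarith
  have hval : lamh = (1.4 * l2 - 0.8 * l3) /
      ((1.4 * l2 - 0.8 * l3) + ((-0.4 * l2 + 0.6 * l3) - (1.4 * l2 - 0.6 * l3))) := by
    rw [eq_div_iff (ne_of_gt hpos)]
    linear_combination -hlamh
  refine ⟨⟨?_, ?_⟩, ?_, ?_, ?_⟩
  · rw [hval, lt_div_iff₀ hpos]; linarith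
  · rw [hval, div_lt_iff₀ hpos]; linarith
  · intro lam _ hlt
    rw [hval, lt_div_iff₀ hpos] at hlt
    rw [eA, eH, eL]
    ring_nf at hlt ⊢
    linarith
  · intro lam _ hlt
    rw [hval, div_lt_iff₀ hpos] at hlt
    rw [eA, eH, eL]
    ring_nf at hlt ⊢
    linarith
  · intro lam; constructor <;> intro h <;> linarith
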